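/- Let n ≥ 1 and let N be a positive integer divisible by 4. Then Σ_{μ∈X_N} q^{(μ,μ+2ρ)} = 0. -/

import Mathlib

open Complex Finset

/-- `qp N r = exp(2πi r / N)`, i.e. `q^r` for `q = exp(2πi/N)`. -/
noncomputable def qp (N : ℕ) (r : ℚ) : ℂ :=
  Complex.exp (2 * (Real.pi : ℂ) * Complex.I * (r : ℂ) / (N : ℂ))

/-- The Weyl vector of `osp(1|2n)`: `ρ_j = n - j + 1/2` for `j = 1, …, n`
(0-indexed: `ρ j = n - j - 1/2`). -/
def rhoV (n : ℕ) : Fin n → ℚ := fun j => (n : ℚ) - (j : ℚ) - 1/2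

/-- The standard dot product on `ℚ^n`. -/
def dotp {n : ℕ} (x y : Fin n → ℚ) : ℚ := ∑ j, x j * y j

/-- Coercion of an integer vector to a rational vector. -/
def intC {n : ℕ} (lam : Fin n → ℤ) : Fin n → ℚ := fun j => (lam j : ℚ)

/-- Coercion of an element of `X_M = {0,…,M-1}^n` to a rational vector. -/
def finC {n M : ℕ} (mu : Fin n → Fin M) : Fin n → ℚ := fun j => ((mu j : ℕ) : ℚ)

/-- The `j`-th standard basis vector of `ℚ^n`. -/
def stdB (n : ℕ) (j : Fin n) : Fin n → ℚ := fun l => if l = j then 1 else 0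

/-- The hyperoctahedral group (Weyl group of `osp(1|2n)`): a permutation with signs. -/
abbrev HypOct (n : ℕ) := Equiv.Perm (Fin n) × (Fin n → ℤˣ)

/-- Action of the hyperoctahedral group on `ℚ^n` by signed permutation of coordinates. -/
def Wact {n : ℕ} (σ : HypOct n) (x : Fin n → ℚ) : Fin n → ℚ :=
  fun j => ((σ.2 j : ℤ) : ℚ) * x (σ.1⁻¹ j)

/-- `ε'(σ) = sgn(π) · ∏_j s_j` for `σ = (π, s)`. -/
def epsW {n : ℕ} (σ : HypOct n) : ℤˣ :=
  Equiv.Perm.sign σ.1 * ∏ j, σ.2 j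

/-- `S'_{λ,μ} = Σ_{σ∈W} ε'(σ) q^{2(λ+ρ, σ(μ+ρ))}` (for rational vectors `λ, μ`). -/
noncomputable def Sprime (n N : ℕ) (lam mu : Fin n → ℚ) : ℂ :=
  ∑ σ : HypOct n,
    ((epsW σ : ℤ) : ℂ) * qp N (2 * dotp (lam + rhoV n) (Wact σ (mu + rhoV n)))

/-- `Q_μ = Σ_{σ∈W} ε'(σ) q^{2(ρ, σ(μ+ρ))}`. -/
noncomputable def Qmu (n N : ℕ) (mu : Fin n → ℤ) : ℂ :=
  ∑ σ : HypOct n,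
    ((epsW σ : ℤ) : ℂ) * qp N (2 * dotp (rhoV n) (Wact σ (intC mu + rhoV n)))

/-- Gauss sum `G(N,m) = Σ_{j=0}^{N-1} q^{j(j+m)}` with `q = exp(2πi/N)`. -/
noncomputable def GaussG (N : ℕ) (m : ℤ) : ℂ :=
  ∑ j : Fin N, qp N ((j : ℚ) * ((j : ℚ) + (m : ℚ)))

/-- `Σ_{μ ∈ X_M} q^{(μ, μ+2ρ)}` where `q = exp(2πi/N)`. -/
noncomputable def sumX (n N M : ℕ) : ℂ :=
  ∑ mu : Fin n → Fin M, qp N (dotp (finC mu) (finC mu + 2 • rhoV n))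

/-- `Σ_{λ ∈ X_M} q^{(λ,λ)} S'_{λ,μ}` where `q = exp(2πi/N)`. -/
noncomputable def sumXS (n N M : ℕ) (mu : Fin n → ℤ) : ℂ :=
  ∑ lam : Fin n → Fin M, qp N (dotp (finC lam) (finC lam)) * Sprime n N (finC lam) (intC mu)

lemma qp_add (N : ℕ) (r s : ℚ) : qp N (r + s) = qp N r * qp N s := by
  unfold qp
  rw [← Complex.exp_add]
  congr 1
  push_cast
  ring

lemma qp_half (N : ℕ) (hN : N ≠ 0) (k : ℤ) : qp N ((N : ℚ) * ((k : ℚ) + 1/2)) = -1 := by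
  unfold qp
  have hNc : (N : ℂ) ≠ 0 := by exact_mod_cast hN
  have h1 : 2 * (Real.pi : ℂ) * Complex.I * ((((N : ℚ) * ((k : ℚ) + 1/2)) : ℚ) : ℂ) / (N : ℂ)
      = ((2 * k + 1 : ℤ) : ℂ) * ((Real.pi : ℂ) * Complex.I) := by
    push_cast
    field_simp
  rw [h1, Complex.exp_int_mul, Complex.exp_pi_mul_I]
  exact Odd.neg_one_zpow ⟨k, by ring⟩

/-- For `n ≥ 1` and `N` a positive multiple of 4,
`Σ_{μ∈X_N} q^{(μ,μ+2ρ)} = 0`. -/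
theorem sumX_vanishes (n N : ℕ) (hn : 1 ≤ n) (hNpos : 1 ≤ N) (hN4 : 4 ∣ N) :
    sumX n N N = 0 := by
  obtain ⟨M, rfl⟩ := hN4
  have hM : 1 ≤ M := by omega
  have hN0 : (4 * M) ≠ 0 := by omega
  haveI : NeZero (4 * M) := ⟨hN0⟩
  set i0 : Fin n := ⟨0, hn⟩ with hi0
  set c : Fin (4 * M) := ⟨2 * M, by omega⟩ with hc
  set φ : (Fin n → Fin (4 * M)) ≃ (Fin n → Fin (4 * M)) :=
    Equiv.piCongrRight (fun j => if j = i0 then Equiv.addRight c else Equiv.refl _) with hφdef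
  have expand : ∀ x : Fin n → ℚ, dotp x (x + 2 • rhoV n) = ∑ j, x j * (x j + 2 * rhoV n j) := by
    intro x
    unfold dotp
    refine Finset.sum_congr rfl fun j _ => ?_
    simp [Pi.add_apply, Pi.smul_apply]
  have hφapp : ∀ (mu : Fin n → Fin (4 * M)) (j : Fin n),
      φ mu j = if j = i0 then mu j + c else mu j := by
    intro mu j
    by_cases h : j = i0 <;> simp [hφdef, Equiv.piCongrRight, h]
  have key : ∀ mu : Fin n → Fin (4 * M),
      qp (4 * M) (dotp (finC (φ mu)) (finC (φ mu) + 2 • rhoV n))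
        = - qp (4 * M) (dotp (finC mu) (finC mu + 2 • rhoV n)) := by
    intro mu
    set a : ℕ := (mu i0 : ℕ) with ha
    have haN : a < 4 * M := (mu i0).isLt
    have hb : ((φ mu i0 : ℕ)) = (a + 2 * M) % (4 * M) := by
      rw [hφapp]
      simp [Fin.add_def, hc]
      rfl
    have hΔ : ∃ k : ℤ, dotp (finC (φ mu)) (finC (φ mu) + 2 • rhoV n)
        = dotp (finC mu) (finC mu + 2 • rhoV n) + ((4 * M : ℕ) : ℚ) * ((k : ℚ) + 1/2) := by
      have hsplit : ∀ x : Fin n → Fin (4 * M),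
          dotp (finC x) (finC x + 2 • rhoV n)
            = ((x i0 : ℕ) : ℚ) * (((x i0 : ℕ) : ℚ) + 2 * rhoV n i0)
              + ∑ j ∈ Finset.univ.erase i0, (finC x j) * (finC x j + 2 * rhoV n j) := by
        intro x
        rw [expand]
        exact (Finset.add_sum_erase _ _ (Finset.mem_univ i0)).symm
      have herase : ∑ j ∈ Finset.univ.erase i0, (finC (φ mu) j) * (finC (φ mu) j + 2 * rhoV n j)
          = ∑ j ∈ Finset.univ.erase i0, (finC mu j) * (finC mu j + 2 * rhoV n j) := by
        refine Finset.sum_congr rfl fun j hj => ?_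
        have hji : j ≠ i0 := Finset.ne_of_mem_erase hj
        have : φ mu j = mu j := by rw [hφapp]; simp [hji]
        rw [show finC (φ mu) j = finC mu j by unfold finC; rw [this]]
      have hrho : rhoV n i0 = (n : ℚ) - 1/2 := by
        unfold rhoV
        norm_num [hi0]
      by_cases hcase : a + 2 * M < 4 * M
      · refine ⟨(a : ℤ) + M + n - 1, ?_⟩
        rw [hsplit (φ mu), hsplit mu, herase, hb, Nat.mod_eq_of_lt hcase, hrho, ← ha]
        push_cast
        ring
      · refine ⟨(M : ℤ) - a - n, ?_⟩
        have h1 : a + 2 * M - 4 * M < 4 * M := by omega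
        have h2 : (a + 2 * M) % (4 * M) = a + 2 * M - 4 * M := by
          rw [Nat.mod_eq_sub_mod (by omega), Nat.mod_eq_of_lt h1]
        rw [hsplit (φ mu), hsplit mu, herase, hb, h2, hrho, ← ha]
        have h3 : 4 * M ≤ a + 2 * M := by omega
        push_cast [Nat.cast_sub h3]
        ring
    obtain ⟨k, hk⟩ := hΔ
    rw [hk, qp_add, qp_half _ hN0 k]
    ring
  have hS : sumX n (4 * M) (4 * M) = - sumX n (4 * M) (4 * M) := by
    unfold sumX
    conv_lhs => rw [← Equiv.sum_comp φ
      (fun mu => qp (4 * M) (dotp (finC mu) (finC mu + 2 • rhoV n)))]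
    rw [← Finset.sum_neg_distrib]
    exact Finset.sum_congr rfl fun mu _ => key mu
  have h2 : (2 : ℂ) * sumX n (4 * M) (4 * M) = 0 := by linear_combination hS
  exact (mul_eq_zero.mp h2).resolve_left two_ne_zero
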